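/- Let a, b ≥ 3 be integers, M = [[0, 3b+1],[3a, 0]], D = {(0,0)^t, (1,0)^t, (2,9)^t} ⊂ ℤ², and C = {(0,0)^t, (1/3,0)^t, (2/3,0)^t}. For each integer m ≥ 1, let μ_m = δ_{M^{−1}D} * δ_{M^{−2}D} * ⋯ * δ_{M^{−m}D} and Λ_m = { Σ_{i=1}^{m} (M^t)^i c_i : c_i ∈ C }. Then Λ_m is a spectrum of μ_m; that is, {e^{2πi⟨λ,x⟩} : λ ∈ Λ_m} is an orthonormal basis of L²(μ_m). -/

import Mathlib

open MeasureTheory Matrix Set Complex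
open scoped Real Pointwise ENNReal

noncomputable section

namespace SA

variable {n : ℕ}

/-- Cast an integer matrix to a real matrix. -/
def toR (M : Matrix (Fin n) (Fin n) ℤ) : Matrix (Fin n) (Fin n) ℝ :=
  M.map (Int.cast : ℤ → ℝ)

/-- Cast an integer vector to a real vector. -/
def vecR (d : Fin n → ℤ) : Fin n → ℝ := fun i => (d i : ℝ)

/-- A real matrix is expanding if all of its complex eigenvalues have modulus > 1. -/
def IsExpandingR (M : Matrix (Fin n) (Fin n) ℝ) : Prop :=
  ∀ z : ℂ, (M.map (Complex.ofReal)).charpoly.IsRoot z → 1 < ‖z‖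

/-- An integer matrix is expanding if all of its complex eigenvalues have modulus > 1. -/
def IsExpanding (M : Matrix (Fin n) (Fin n) ℤ) : Prop :=
  IsExpandingR (toR M)

/-- Standard inner product on `ℝ^n`. -/
def dotR (x y : Fin n → ℝ) : ℝ := ∑ i, x i * y i

/-- The exponential function `e_λ(x) = e^{2πi⟨λ,x⟩}`. -/
def expFun (lam : Fin n → ℝ) : (Fin n → ℝ) → ℂ :=
  fun x => Complex.exp (2 * Real.pi * Complex.I * (dotR lam x))

/-- Mask polynomial of a finite real digit set. -/
def maskR (D : Finset (Fin n → ℝ)) (x : Fin n → ℝ) : ℂ :=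
  (D.card : ℂ)⁻¹ * ∑ d ∈ D, Complex.exp (2 * Real.pi * Complex.I * (dotR d x))

/-- Zero set of the mask polynomial of a real digit set. -/
def maskZR (D : Finset (Fin n → ℝ)) : Set (Fin n → ℝ) := {x | maskR D x = 0}

/-- Mask polynomial of a finite integer digit set. -/
def mask (D : Finset (Fin n → ℤ)) (x : Fin n → ℝ) : ℂ :=
  (D.card : ℂ)⁻¹ * ∑ d ∈ D, Complex.exp (2 * Real.pi * Complex.I * (dotR (vecR d) x))

/-- Zero set `Z(m_D)` of the mask polynomial of an integer digit set. -/
def maskZ (D : Finset (Fin n → ℤ)) : Set (Fin n → ℝ) := {x | mask D x = 0}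

/-- `Z_D^n := Z(m_D) ∩ [0,1)^n`. -/
def ZDn (D : Finset (Fin n → ℤ)) : Set (Fin n → ℝ) :=
  maskZ D ∩ {x | ∀ i, 0 ≤ x i ∧ x i < 1}

/-- `E̊_p^n := (1/p){(l₁,…,l_n) : 0 ≤ lᵢ ≤ p-1} \ {0}`. -/
def Ering (p n : ℕ) : Set (Fin n → ℝ) :=
  {x | (∃ l : Fin n → ℕ, (∀ i, l i ≤ p - 1) ∧ ∀ i, x i = (l i : ℝ) / p) ∧ x ≠ 0}

/-- The integer lattice `ℤ^n` inside `ℝ^n`. -/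
def latticeZ (n : ℕ) : Set (Fin n → ℝ) := {x | ∀ i, ∃ k : ℤ, x i = (k : ℝ)}

/-- `μ` is the self-affine measure generated by the real expanding matrix `M`
and the real digit set `D`: it is a Borel probability measure satisfying
`μ = (1/|D|) ∑_{d∈D} μ ∘ φ_d⁻¹` with `φ_d(x) = M⁻¹(x+d)`. -/
def IsSelfAffineR (M : Matrix (Fin n) (Fin n) ℝ) (D : Finset (Fin n → ℝ))
    (μ : Measure (Fin n → ℝ)) : Prop :=
  IsProbabilityMeasure μ ∧
    μ = (D.card : ℝ≥0∞)⁻¹ • ∑ d ∈ D, μ.map (fun x => M⁻¹.mulVec (x + d))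

/-- `μ` is the self-affine measure generated by the integer expanding matrix `M`
and the integer digit set `D`. -/
def IsSelfAffine (M : Matrix (Fin n) (Fin n) ℤ) (D : Finset (Fin n → ℤ))
    (μ : Measure (Fin n → ℝ)) : Prop :=
  IsProbabilityMeasure μ ∧
    μ = (D.card : ℝ≥0∞)⁻¹ • ∑ d ∈ D, μ.map (fun x => (toR M)⁻¹.mulVec (x + vecR d))

/-- Fourier transform `μ̂(ξ) = ∫ e^{2πi⟨x,ξ⟩} dμ(x)`. -/
def FT (μ : Measure (Fin n → ℝ)) (ξ : Fin n → ℝ) : ℂ :=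
  ∫ x, Complex.exp (2 * Real.pi * Complex.I * (dotR x ξ)) ∂μ

/-- The family of exponentials `E(Λ)` is mutually orthogonal in `L²(μ)`:
`μ̂(λ - λ') = 0` for all distinct `λ, λ' ∈ Λ`. -/
def OrthExp (μ : Measure (Fin n → ℝ)) (Λ : Set (Fin n → ℝ)) : Prop :=
  ∀ a ∈ Λ, ∀ b ∈ Λ, a ≠ b → FT μ (a - b) = 0

/-- `Λ` is a spectrum of `μ`: the exponentials `{e^{2πi⟨λ,x⟩} : λ ∈ Λ}` form an
orthonormal (Hilbert) basis of `L²(μ)`. -/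
def IsSpectrum (μ : Measure (Fin n → ℝ)) (Λ : Set (Fin n → ℝ)) : Prop :=
  ∃ b : HilbertBasis Λ ℂ (Lp ℂ 2 μ), ∀ l : Λ, (b l : Lp ℂ 2 μ) =ᵐ[μ] expFun (l : Fin n → ℝ)

/-- `μ` is a spectral measure. -/
def IsSpectralMeasure (μ : Measure (Fin n → ℝ)) : Prop :=
  ∃ Λ : Set (Fin n → ℝ), Λ.Countable ∧ IsSpectrum μ Λ

/-- `(M, D)` is admissible: there is `S ⊂ ℤ^n` with `|S| = |D|` such that
`H = (1/√|S|)[e^{2πi⟨M⁻¹d,s⟩}]_{d∈D,s∈S}` satisfies `H^*H = I`. -/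
def Admissible (M : Matrix (Fin n) (Fin n) ℤ) (D : Finset (Fin n → ℤ)) : Prop :=
  ∃ S : Finset (Fin n → ℤ), S.card = D.card ∧
    letI H : Matrix {d // d ∈ D} {s // s ∈ S} ℂ := fun d s =>
      ((1 : ℂ) / (Real.sqrt S.card : ℂ)) *
        Complex.exp (2 * Real.pi * Complex.I *
          (dotR ((toR M)⁻¹.mulVec (vecR (d : Fin n → ℤ))) (vecR (s : Fin n → ℤ))))
    Hᴴ * H = 1

/-- Two matrices are congruent entrywise modulo `p`. -/
def ModEq (p : ℕ) (A B : Matrix (Fin n) (Fin n) ℤ) : Prop :=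
  ∀ i j, (p : ℤ) ∣ (A i j - B i j)

/-- `(M, D)` and `(M̃, D̃)` are conjugate in `GL_n(p)`: there are integer matrices
`A, B` with determinants prime to `p`, `AB ≡ I (mod p)`, `M̃ = AMB`, and either
`D = B D̃` or `D̃ = A D`. -/
def ConjugateGL (p : ℕ) (M Mt : Matrix (Fin n) (Fin n) ℤ)
    (D Dt : Finset (Fin n → ℤ)) : Prop :=
  ∃ A B : Matrix (Fin n) (Fin n) ℤ,
    ¬ (p : ℤ) ∣ A.det ∧ ¬ (p : ℤ) ∣ B.det ∧ ModEq p (A * B) 1 ∧ Mt = A * M * B ∧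
      ((∀ d, d ∈ D ↔ ∃ dt ∈ Dt, d = B.mulVec dt) ∨
       (∀ dt, dt ∈ Dt ↔ ∃ d ∈ D, dt = A.mulVec d))


/-- Convolution of two measures on `ℝ²`. -/
def mconv (μ ν : Measure (Fin 2 → ℝ)) : Measure (Fin 2 → ℝ) :=
  (μ.prod ν).map (fun x => x.1 + x.2)

/-- The uniform atomic measure `δ_{N D}` for an integer digit set `D` pushed
through a real matrix `N`. -/
def uatom (N : Matrix (Fin 2) (Fin 2) ℝ) (D : Finset (Fin 2 → ℤ)) :
    Measure (Fin 2 → ℝ) :=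
  (D.card : ℝ≥0∞)⁻¹ • ∑ d ∈ D, Measure.dirac (N.mulVec (vecR d))

/-- `μ_m = δ_{M⁻¹D} * δ_{M⁻²D} * ⋯ * δ_{M⁻ᵐD}`. -/
def muN (M : Matrix (Fin 2) (Fin 2) ℝ) (D : Finset (Fin 2 → ℤ)) :
    ℕ → Measure (Fin 2 → ℝ)
  | 0 => Measure.dirac 0
  | m + 1 => mconv (muN M D m) (uatom (M⁻¹ ^ (m + 1)) D)

def dg : Fin 3 → Fin 2 → ℤ := ![![0,0], ![1,0], ![2,9]]
def cg : Fin 3 → Fin 2 → ℝ := ![![0,0], ![1/3,0], ![2/3,0]]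

abbrev V := Fin 2 → ℝ

def Xat (N : Matrix (Fin 2) (Fin 2) ℝ) (m : ℕ) (ε : Fin m → Fin 3) : V :=
  ∑ i : Fin m, (N⁻¹ ^ (i.val + 1)).mulVec (vecR (dg (ε i)))

lemma map_finset_sum {α β : Type*} [MeasurableSpace α] [MeasurableSpace β]
    {ι : Type*} (s : Finset ι) (νf : ι → Measure α) {f : α → β}
    (hf : Measurable f) : (∑ j ∈ s, νf j).map f = ∑ j ∈ s, (νf j).map f := by
  classical
  induction s using Finset.induction_on with
  | empty => simp [Measure.map_zero]
  | insert _ _ h ih => simp [Finset.sum_insert h, Measure.map_add _ _ hf, ih]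

lemma prod_smul_sum (μ : Measure V) [SigmaFinite μ] {ι : Type*} [Fintype ι]
    (y : ι → V) :
    μ.prod (((3:ℝ≥0∞))⁻¹ • ∑ j : ι, Measure.dirac (y j)) =
      ((3:ℝ≥0∞))⁻¹ • ∑ j : ι, μ.prod (Measure.dirac (y j)) := by
  haveI hfin : IsFiniteMeasure (((3:ℝ≥0∞))⁻¹ • ∑ j : ι, Measure.dirac (y j)) := by
    constructor
    rw [Measure.smul_apply, Measure.finset_sum_apply]
    simp [measure_univ]
    exact ENNReal.mul_lt_top (by simp) (by simp)
  apply Measure.prod_eq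
  intro s t hs ht
  rw [Measure.smul_apply, Measure.finset_sum_apply, Measure.smul_apply,
    Measure.finset_sum_apply]
  simp only [Measure.prod_prod]
  simp only [smul_eq_mul, Finset.mul_sum]
  exact Finset.sum_congr rfl (fun j _ => by ring)



lemma isFiniteMeasure_atomic (c : ℝ≥0∞) (hc : c ≠ ⊤) {ι : Type*} [Fintype ι] (x : ι → V) :
    IsFiniteMeasure (c • ∑ ε : ι, Measure.dirac (x ε)) := by
  constructor
  rw [Measure.smul_apply, Measure.finset_sum_apply]
  simp only [measure_univ, Finset.sum_const, Finset.card_univ, nsmul_eq_mul, mul_one,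
    smul_eq_mul]
  exact ENNReal.mul_lt_top hc.lt_top (by simp)

lemma mconv_smul_sum (μ : Measure V) [SigmaFinite μ] (y : Fin 3 → V) :
    mconv μ ((3:ℝ≥0∞)⁻¹ • ∑ j : Fin 3, Measure.dirac (y j)) =
      (3:ℝ≥0∞)⁻¹ • ∑ j : Fin 3, μ.map (· + y j) := by
  unfold mconv
  rw [prod_smul_sum, Measure.map_smul,
    map_finset_sum (f := fun x : V × V => x.1 + x.2) _ _ (measurable_fst.add measurable_snd)]
  congr 1
  refine Finset.sum_congr rfl fun j _ => ?_
  rw [Measure.prod_dirac,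
    Measure.map_map (g := fun x : V × V => x.1 + x.2) (measurable_fst.add measurable_snd)
      (show Measurable fun x : V => (x, y j) from measurable_id.prodMk measurable_const)]
  rfl

lemma Xat_snoc (N : Matrix (Fin 2) (Fin 2) ℝ) (m : ℕ) (ε : Fin m → Fin 3) (j : Fin 3) :
    Xat N (m+1) (Fin.snoc ε j) = Xat N m ε + (N⁻¹ ^ (m+1)).mulVec (vecR (dg j)) := by
  unfold Xat
  rw [Fin.sum_univ_castSucc]
  simp [Fin.snoc_castSucc, Fin.snoc_last, Fin.coe_castSucc]

lemma muN_atomic (N : Matrix (Fin 2) (Fin 2) ℝ) (D : Finset (Fin 2 → ℤ))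
    (hD : ∀ f : (Fin 2 → ℤ) → Measure V, ∑ d ∈ D, f d = ∑ r : Fin 3, f (dg r))
    (hcard : (D.card : ℝ≥0∞) = 3) (m : ℕ) :
    muN N D m = ((3:ℝ≥0∞)⁻¹ ^ m) • ∑ ε : Fin m → Fin 3, Measure.dirac (Xat N m ε) := by
  induction m with
  | zero => simp [muN, Xat, Finset.univ_unique]
  | succ m ih =>
    show mconv (muN N D m) (uatom (N⁻¹ ^ (m+1)) D) = _
    rw [ih]
    have huat : uatom (N⁻¹ ^ (m+1)) D =
        (3:ℝ≥0∞)⁻¹ • ∑ r : Fin 3, Measure.dirac ((N⁻¹ ^ (m+1)).mulVec (vecR (dg r))) := by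
      unfold uatom; rw [hcard, hD]
    rw [huat]
    haveI := isFiniteMeasure_atomic ((3:ℝ≥0∞)⁻¹ ^ m) (by simp) (Xat N m)
    rw [mconv_smul_sum]
    have hmap : ∀ j : Fin 3,
        (((3:ℝ≥0∞)⁻¹ ^ m) • ∑ ε : Fin m → Fin 3, Measure.dirac (Xat N m ε)).map
          (· + (N⁻¹ ^ (m+1)).mulVec (vecR (dg j))) =
        ((3:ℝ≥0∞)⁻¹ ^ m) • ∑ ε : Fin m → Fin 3,
          Measure.dirac (Xat N m ε + (N⁻¹ ^ (m+1)).mulVec (vecR (dg j))) := by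
      intro j
      rw [Measure.map_smul, map_finset_sum _ _ (measurable_add_const _)]
      congr 1
      exact Finset.sum_congr rfl fun ε _ =>
        Measure.map_dirac' (measurable_add_const _) _
    rw [Finset.sum_congr rfl fun j _ => hmap j]
    rw [← Finset.smul_sum]
    rw [smul_smul, ← pow_succ']
    congr 1
    have heq := Fintype.sum_equiv (Fin.snocEquiv fun _ => Fin 3)
      (fun p : Fin 3 × (Fin m → Fin 3) =>
        Measure.dirac (Xat N m p.2 + (N⁻¹ ^ (m+1)).mulVec (vecR (dg p.1))))
      (fun ε => Measure.dirac (Xat N (m+1) ε)) (fun p => by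
        show _ = Measure.dirac (Xat N (m+1) (Fin.snoc p.2 p.1))
        rw [Xat_snoc])
    rw [← heq, Fintype.sum_prod_type]


def eexp (r : ℝ) : ℂ := Complex.exp (2 * Real.pi * Complex.I * r)

lemma eexp_add (r s : ℝ) : eexp (r + s) = eexp r * eexp s := by
  unfold eexp; rw [← Complex.exp_add]; push_cast; ring_nf

lemma eexp_zero : eexp 0 = 1 := by simp [eexp]

lemma eexp_int (k : ℤ) : eexp (k : ℝ) = 1 := by
  unfold eexp
  rw [show 2 * (Real.pi:ℂ) * Complex.I * (k:ℝ) = (k:ℤ) * (2 * Real.pi * Complex.I) by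
    push_cast; ring]
  exact Complex.exp_int_mul_two_pi_mul_I k

lemma eexp_add_int (r : ℝ) (k : ℤ) : eexp (r + k) = eexp r := by
  rw [eexp_add, eexp_int, mul_one]

lemma conj_eexp (r : ℝ) : (starRingEnd ℂ) (eexp r) = eexp (-r) := by
  unfold eexp
  rw [← Complex.exp_conj]
  congr 1
  simp only [_root_.map_mul, Complex.conj_I, Complex.conj_ofReal, _root_.map_ofNat]
  push_cast; ring

lemma eexp_nat_mul (r : ℝ) (k : ℕ) : eexp (r * k) = eexp r ^ k := by
  unfold eexp
  rw [← Complex.exp_nat_mul]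
  congr 1
  push_cast; ring

lemma norm_eexp (r : ℝ) : ‖eexp r‖ = 1 := by
  unfold eexp
  rw [Complex.norm_exp]
  norm_num [Complex.mul_re, Complex.mul_im]

lemma continuous_eexp : Continuous eexp := by
  unfold eexp; fun_prop

lemma integrable_dirac' {f : V → ℂ} (hf : Continuous f) (z : V) :
    Integrable f (Measure.dirac z) := by
  refine ⟨hf.aestronglyMeasurable, ?_⟩
  rw [hasFiniteIntegral_def, lintegral_dirac' _ (by fun_prop)]
  exact ENNReal.coe_lt_top

lemma integral_atomic {ι : Type*} [Fintype ι] (c : ℝ≥0∞) (x : ι → V)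
    (f : V → ℂ) (hf : Continuous f) :
    ∫ v, f v ∂(c • ∑ ε : ι, Measure.dirac (x ε)) = c.toReal • ∑ ε : ι, f (x ε) := by
  rw [integral_smul_measure,
    integral_finset_sum_measure (fun ε _ => integrable_dirac' hf (x ε))]
  congr 1
  exact Finset.sum_congr rfl fun ε _ => integral_dirac f (x ε)



lemma toR_mulVec (A : Matrix (Fin 2) (Fin 2) ℤ) (v : Fin 2 → ℤ) :
    (toR A).mulVec (vecR v) = vecR (A.mulVec v) := by
  funext i
  simp only [toR, vecR, Matrix.mulVec, dotProduct, Matrix.map_apply,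
    Fin.sum_univ_two]
  push_cast
  ring

lemma toR_mul (A B : Matrix (Fin 2) (Fin 2) ℤ) : toR (A * B) = toR A * toR B := by
  exact Matrix.map_mul (f := Int.castRingHom ℝ)

lemma toR_pow (A : Matrix (Fin 2) (Fin 2) ℤ) (k : ℕ) : toR (A ^ k) = toR A ^ k := by
  induction k with
  | zero =>
    simp only [pow_zero, toR]
    exact Matrix.map_one _ Int.cast_zero Int.cast_one
  | succ k ih => rw [pow_succ, pow_succ, ← ih, toR_mul]

lemma dotR_two (u v : V) : dotR u v = u 0 * v 0 + u 1 * v 1 := by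
  simp [dotR, Fin.sum_univ_two]

lemma dotR_sub_left (x y z : V) : dotR (x - y) z = dotR x z - dotR y z := by
  simp [dotR_two, Pi.sub_apply]; ring

lemma dotR_sum_left {ι : Type*} (s : Finset ι) (u : ι → V) (z : V) :
    dotR (∑ i ∈ s, u i) z = ∑ i ∈ s, dotR (u i) z := by
  simp only [dotR, Finset.sum_apply, Finset.sum_mul]
  exact Finset.sum_comm

lemma dotR_sum_right {ι : Type*} (s : Finset ι) (z : V) (u : ι → V) :
    dotR z (∑ i ∈ s, u i) = ∑ i ∈ s, dotR z (u i) := by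
  simp only [dotR, Finset.sum_apply, Finset.mul_sum]
  exact Finset.sum_comm

lemma dotR_transpose_mulVec (A : Matrix (Fin 2) (Fin 2) ℝ) (u v : V) :
    dotR (Aᵀ.mulVec u) v = dotR u (A.mulVec v) := by
  show (Aᵀ.mulVec u) ⬝ᵥ v = u ⬝ᵥ (A.mulVec v)
  rw [Matrix.mulVec_transpose, dotProduct_mulVec]

lemma cg_zero_apply (p : Fin 3) : cg p 0 = ((p : ℕ) : ℝ) / 3 ∧ cg p 1 = 0 := by
  fin_cases p <;> norm_num [cg]

lemma dg_zero_apply (p : Fin 3) : (dg p 0 : ℝ) = ((p : ℕ) : ℝ) := by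
  fin_cases p <;> norm_num [dg]



def lamF (N : Matrix (Fin 2) (Fin 2) ℝ) (m : ℕ) (σ : Fin m → Fin 3) : V :=
  ∑ i : Fin m, (Nᵀ ^ (i.val + 1)).mulVec (cg (σ i))

lemma eexp_sum {ι : Type*} (s : Finset ι) (f : ι → ℝ) :
    eexp (∑ i ∈ s, f i) = ∏ i ∈ s, eexp (f i) := by
  classical
  induction s using Finset.induction_on with
  | empty => simp [eexp_zero]
  | insert _ _ h ih => rw [Finset.sum_insert h, Finset.prod_insert h, eexp_add, ih]

lemma pow_mul_inv_pow (N : Matrix (Fin 2) (Fin 2) ℝ) (h : IsUnit N.det) (k : ℕ) :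
    N ^ k * N⁻¹ ^ k = 1 := by
  have hc : Commute N N⁻¹ :=
    (Matrix.mul_nonsing_inv N h).trans (Matrix.nonsing_inv_mul N h).symm
  rw [← hc.mul_pow, Matrix.mul_nonsing_inv N h, one_pow]

variable {a b : ℤ} {M : Matrix (Fin 2) (Fin 2) ℤ}

lemma detM_isUnit (ha : 3 ≤ a) (hb : 3 ≤ b) (hMeq : M = !![0, 3*b+1; 3*a, 0]) :
    IsUnit (toR M).det := by
  have h1 : (toR M).det = ((M.det : ℤ) : ℝ) := by
    exact (RingHom.map_det (Int.castRingHom ℝ) M).symm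
  rw [h1, isUnit_iff_ne_zero]
  subst hMeq
  rw [Matrix.det_fin_two_of]
  have : (0 : ℤ) * 0 - (3*b+1) * (3*a) ≠ 0 := by nlinarith
  exact_mod_cast this

lemma M_dg (hMeq : M = !![0, 3*b+1; 3*a, 0]) (r : Fin 3) :
    ∃ v : Fin 2 → ℤ, M.mulVec (dg r) = fun i => 3 * v i := by
  subst hMeq
  fin_cases r
  · exact ⟨![0, 0], by
      funext i
      fin_cases i <;> simp [Matrix.mulVec, dotProduct, dg, Fin.sum_univ_two]⟩
  · exact ⟨![0, a], by
      funext i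
      fin_cases i <;> simp [Matrix.mulVec, dotProduct, dg, Fin.sum_univ_two]⟩
  · exact ⟨![3*(3*b+1), 2*a], by
      funext i
      fin_cases i <;>
        simp [Matrix.mulVec, dotProduct, dg, Fin.sum_univ_two] <;> ring⟩

lemma Mpow_dg (hMeq : M = !![0, 3*b+1; 3*a, 0]) (s : ℕ) (hs : 1 ≤ s) (r : Fin 3) :
    ∃ w : Fin 2 → ℤ, (M ^ s).mulVec (dg r) = fun i => 3 * w i := by
  obtain ⟨s', rfl⟩ : ∃ s', s = s' + 1 := ⟨s - 1, by omega⟩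
  obtain ⟨v, hv⟩ := M_dg hMeq r
  refine ⟨(M ^ s').mulVec v, ?_⟩
  rw [pow_succ, ← Matrix.mulVec_mulVec, hv]
  have h3 : (fun i => 3 * v i) = (3 : ℤ) • v := by funext i; simp [smul_eq_mul]
  rw [h3, Matrix.mulVec_smul]
  funext i; simp [smul_eq_mul]


variable {a b : ℤ} {M : Matrix (Fin 2) (Fin 2) ℤ}

lemma key_sum (ha : 3 ≤ a) (hb : 3 ≤ b) (hMeq : M = !![0, 3*b+1; 3*a, 0]) (m : ℕ)
    (σ σ' : Fin m → Fin 3) (hne : σ ≠ σ') :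
    ∑ ε : Fin m → Fin 3,
      eexp (dotR (lamF (toR M) m σ - lamF (toR M) m σ') (Xat (toR M) m ε)) = 0 := by
  classical
  set N : Matrix (Fin 2) (Fin 2) ℝ := toR M with hN
  have hdet : IsUnit N.det := detM_isUnit ha hb hMeq
  set g : Fin m → Fin 3 → ℝ := fun i r => ∑ j : Fin m,
    dotR (cg (σ j) - cg (σ' j))
      ((N ^ (j.val + 1) * N⁻¹ ^ (i.val + 1)).mulVec (vecR (dg r))) with hg
  have hdot : ∀ ε : Fin m → Fin 3,
      dotR (lamF N m σ - lamF N m σ') (Xat N m ε) = ∑ i : Fin m, g i (ε i) := by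
    intro ε
    have h1 : lamF N m σ - lamF N m σ' =
        ∑ j : Fin m, (Nᵀ ^ (j.val + 1)).mulVec (cg (σ j) - cg (σ' j)) := by
      unfold lamF
      rw [← Finset.sum_sub_distrib]
      exact Finset.sum_congr rfl fun j _ => (Matrix.mulVec_sub _ _ _).symm
    rw [h1, dotR_sum_left]
    have h2 : ∀ j : Fin m,
        dotR ((Nᵀ ^ (j.val + 1)).mulVec (cg (σ j) - cg (σ' j))) (Xat N m ε) =
        ∑ i : Fin m, dotR (cg (σ j) - cg (σ' j))
          ((N ^ (j.val + 1) * N⁻¹ ^ (i.val + 1)).mulVec (vecR (dg (ε i)))) := by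
      intro j
      unfold Xat
      rw [dotR_sum_right]
      refine Finset.sum_congr rfl fun i _ => ?_
      rw [← Matrix.transpose_pow, dotR_transpose_mulVec, Matrix.mulVec_mulVec]
    rw [Finset.sum_congr rfl fun j _ => h2 j, Finset.sum_comm]
  have hfact : ∑ ε : Fin m → Fin 3,
      eexp (dotR (lamF N m σ - lamF N m σ') (Xat N m ε)) =
      ∏ i : Fin m, ∑ r : Fin 3, eexp (g i r) := by
    rw [Finset.prod_univ_sum]
    rw [Fintype.piFinset_univ]
    refine Finset.sum_congr rfl fun ε _ => ?_
    rw [hdot ε, eexp_sum]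
  rw [hfact]
  -- find minimal disagreement index
  set S : Finset (Fin m) := Finset.univ.filter fun j => σ j ≠ σ' j with hS
  have hSne : S.Nonempty := by
    obtain ⟨j, hj⟩ := Function.ne_iff.mp hne
    exact ⟨j, Finset.mem_filter.mpr ⟨Finset.mem_univ _, hj⟩⟩
  set i₀ : Fin m := S.min' hSne with hi₀def
  have hi₀ : σ i₀ ≠ σ' i₀ := (Finset.mem_filter.mp (S.min'_mem hSne)).2
  have hmin : ∀ j, j < i₀ → σ j = σ' j := by
    intro j hj
    by_contra hne'
    exact absurd (S.min'_le j (Finset.mem_filter.mpr ⟨Finset.mem_univ _, hne'⟩))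
      (not_le.mpr hj)
  apply Finset.prod_eq_zero (Finset.mem_univ i₀)
  -- evaluate the i₀ factor
  set t : ℤ := ((σ i₀ : ℕ) : ℤ) - ((σ' i₀ : ℕ) : ℤ) with ht
  have hform : ∀ r : Fin 3, ∃ nr : ℤ,
      g i₀ r = (t : ℝ) * ((r : ℕ) : ℝ) / 3 + nr := by
    intro r
    have hTj : ∀ j : Fin m, ∃ x : ℤ,
        dotR (cg (σ j) - cg (σ' j))
          ((N ^ (j.val + 1) * N⁻¹ ^ (i₀.val + 1)).mulVec (vecR (dg r))) =
        (if j = i₀ then (t : ℝ) * ((r : ℕ) : ℝ) / 3 else 0) + (x : ℝ) := by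
      intro j
      rcases lt_trichotomy j i₀ with hlt | heq | hgt
      · refine ⟨0, ?_⟩
        rw [if_neg hlt.ne, hmin j hlt]
        simp [dotR_two]
      · refine ⟨0, ?_⟩
        rw [heq, if_pos rfl, pow_mul_inv_pow N hdet, Matrix.one_mulVec]
        have h0 : vecR (dg r) 0 = ((r : ℕ) : ℝ) := dg_zero_apply r
        rw [dotR_two]
        rw [Pi.sub_apply, Pi.sub_apply, (cg_zero_apply (σ i₀)).1, (cg_zero_apply (σ' i₀)).1,
          (cg_zero_apply (σ i₀)).2, (cg_zero_apply (σ' i₀)).2, h0]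
        simp only [ht]
        push_cast
        ring
      · -- i₀ < j
        have hsplit : j.val + 1 = (j.val - i₀.val) + (i₀.val + 1) := by omega
        obtain ⟨w, hw⟩ := Mpow_dg hMeq (j.val - i₀.val) (by omega) r
        refine ⟨(((σ j : ℕ) : ℤ) - ((σ' j : ℕ) : ℤ)) * w 0, ?_⟩
        rw [if_neg hgt.ne', hsplit, pow_add, mul_assoc, pow_mul_inv_pow N hdet, mul_one]
        rw [hN, ← toR_pow, toR_mulVec, hw]
        have h0 : vecR (fun i => 3 * w i) 0 = 3 * (w 0 : ℝ) := by
          simp [vecR]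
        have h1 : vecR (fun i => 3 * w i) 1 = 3 * (w 1 : ℝ) := by
          simp [vecR]
        rw [dotR_two, Pi.sub_apply, Pi.sub_apply, (cg_zero_apply (σ j)).1,
          (cg_zero_apply (σ' j)).1, (cg_zero_apply (σ j)).2, (cg_zero_apply (σ' j)).2,
          h0, h1]
        push_cast
        ring
    choose h hh using hTj
    refine ⟨∑ j : Fin m, h j, ?_⟩
    rw [hg]
    simp only []
    rw [Finset.sum_congr rfl fun j _ => hh j, Finset.sum_add_distrib,
      Finset.sum_ite_eq' Finset.univ i₀ (fun _ => (t : ℝ) * ((r : ℕ) : ℝ) / 3)]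
    rw [if_pos (Finset.mem_univ i₀)]
    push_cast
    ring
  have hval : ∀ r : Fin 3, eexp (g i₀ r) = eexp ((t : ℝ) / 3) ^ (r : ℕ) := by
    intro r
    obtain ⟨nr, hnr⟩ := hform r
    rw [hnr, eexp_add_int,
      show (t : ℝ) * ((r : ℕ) : ℝ) / 3 = (t : ℝ) / 3 * ((r : ℕ) : ℝ) by ring,
      eexp_nat_mul]
  rw [Finset.sum_congr rfl fun r _ => hval r]
  rw [Fin.sum_univ_three]
  set ζ : ℂ := eexp ((t : ℝ) / 3) with hζ
  have hζ3 : ζ ^ 3 = 1 := by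
    rw [hζ, ← eexp_nat_mul]
    rw [show (t : ℝ) / 3 * ((3 : ℕ) : ℝ) = (t : ℝ) by push_cast; ring]
    exact eexp_int t
  have hζ1 : ζ ≠ 1 := by
    intro hone
    rw [hζ] at hone
    unfold eexp at hone
    obtain ⟨k, hk⟩ := Complex.exp_eq_one_iff.mp hone
    rw [show ((k : ℂ)) * (2 * Real.pi * Complex.I) =
      2 * Real.pi * Complex.I * (k : ℂ) by ring] at hk
    have hpi : (2 * (Real.pi : ℂ) * Complex.I) ≠ 0 := by
      simp [Real.pi_ne_zero, Complex.I_ne_zero, Complex.ofReal_ne_zero]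
    have hx : ((((t : ℝ) / 3 : ℝ)) : ℂ) = (k : ℂ) := mul_left_cancel₀ hpi hk
    have ht3 : (t : ℝ) = 3 * (k : ℝ) := by
      have := congrArg Complex.re hx
      simp at this
      linarith
    have htz : t = 3 * k := by exact_mod_cast ht3
    have h1 : ((σ i₀ : ℕ) : ℤ) < 3 := by exact_mod_cast (σ i₀).isLt
    have h2 : ((σ' i₀ : ℕ) : ℤ) < 3 := by exact_mod_cast (σ' i₀).isLt
    have h3 : ((σ i₀ : ℕ) : ℤ) ≠ ((σ' i₀ : ℕ) : ℤ) := by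
      intro hval'
      exact hi₀ (Fin.ext (by exact_mod_cast hval'))
    have h4 : (0:ℤ) ≤ ((σ i₀ : ℕ) : ℤ) := by positivity
    have h5 : (0:ℤ) ≤ ((σ' i₀ : ℕ) : ℤ) := by positivity
    omega
  have hfin : (ζ - 1) * (1 + ζ + ζ ^ 2) = 0 := by linear_combination hζ3
  rcases mul_eq_zero.mp hfin with h | h
  · exact absurd (sub_eq_zero.mp h) hζ1
  · calc ζ ^ ((0 : Fin 3) : ℕ) + ζ ^ ((1 : Fin 3) : ℕ) + ζ ^ ((2 : Fin 3) : ℕ)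
        = 1 + ζ + ζ ^ 2 := by norm_num
      _ = 0 := h



lemma atomic_ae {ι : Type*} [Fintype ι] {μ : Measure V} {x : ι → V} {c : ℝ≥0∞}
    (hμ : μ = c • ∑ ε : ι, Measure.dirac (x ε)) (hc : c ≠ 0)
    {f g : V → ℂ} (h : f =ᵐ[μ] g) (ε : ι) : f (x ε) = g (x ε) := by
  have hpos : μ {x ε} ≠ 0 := by
    rw [hμ, Measure.smul_apply, Measure.finset_sum_apply, smul_eq_mul]
    have h1 : (1 : ℝ≥0∞) ≤ ∑ ε' : ι, Measure.dirac (x ε') {x ε} := by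
      refine le_trans (le_of_eq ?_)
        (Finset.single_le_sum (f := fun ε' => Measure.dirac (x ε') {x ε})
          (fun _ _ => zero_le) (Finset.mem_univ ε))
      exact (Measure.dirac_apply_of_mem (Set.mem_singleton _)).symm
    intro hz
    rcases mul_eq_zero.mp hz with h' | h'
    · exact hc h'
    · rw [h'] at h1; exact (by norm_num : ¬ ((1:ℝ≥0∞) ≤ 0)) h1
  by_contra hne
  have hsub : {x ε} ⊆ {v | f v ≠ g v} := by
    intro v hv
    rw [Set.mem_singleton_iff] at hv
    subst hv; exact hne
  have : μ {x ε} ≤ μ {v | f v ≠ g v} := measure_mono hsub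
  rw [MeasureTheory.ae_iff.mp h] at this
  exact hpos (le_antisymm this zero_le)

lemma atomic_off {ι : Type*} [Fintype ι] {μ : Measure V} {x : ι → V} {c : ℝ≥0∞}
    (hμ : μ = c • ∑ ε : ι, Measure.dirac (x ε)) :
    μ (Set.range x)ᶜ = 0 := by
  rw [hμ, Measure.smul_apply, Measure.finset_sum_apply, smul_eq_mul]
  have : ∀ ε : ι, Measure.dirac (x ε) (Set.range x)ᶜ = 0 := by
    intro ε
    rw [Measure.dirac_apply' _ ((Set.finite_range x).measurableSet.compl)]
    have : x ε ∉ (Set.range x)ᶜ := fun h => h (Set.mem_range_self ε)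
    simp [Set.indicator_of_notMem this]
  rw [Finset.sum_congr rfl fun ε _ => this ε]
  simp

lemma finrank_Lp_le {ι : Type*} [Fintype ι] (μ : Measure V) (x : ι → V) (c : ℝ≥0∞)
    (hμ : μ = c • ∑ ε : ι, Measure.dirac (x ε)) (hc : c ≠ 0) :
    FiniteDimensional ℂ (Lp ℂ 2 μ) ∧
      Module.finrank ℂ (Lp ℂ 2 μ) ≤ Fintype.card ι := by
  classical
  let Φ : Lp ℂ 2 μ →ₗ[ℂ] (ι → ℂ) :=
    { toFun := fun f ε => (f : V → ℂ) (x ε)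
      map_add' := fun f g => by
        funext ε
        have := atomic_ae hμ hc (Lp.coeFn_add f g) ε
        simpa using this
      map_smul' := fun r f => by
        funext ε
        have := atomic_ae hμ hc (Lp.coeFn_smul r f) ε
        simpa using this }
  have hinj : Function.Injective Φ := by
    intro f g h
    apply Lp.ext (p := (2:ℝ≥0∞)) (μ := μ)
    have hae : ∀ᵐ v ∂μ, v ∈ Set.range x := by
      rw [MeasureTheory.ae_iff]
      have : {v | ¬ v ∈ Set.range x} = (Set.range x)ᶜ := rfl
      rw [this, atomic_off hμ]
    refine hae.mono fun v hv => ?_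
    obtain ⟨ε, rfl⟩ := hv
    exact congrFun h ε
  haveI hfd : FiniteDimensional ℂ (Lp ℂ 2 μ) := FiniteDimensional.of_injective Φ hinj
  refine ⟨hfd, le_trans (LinearMap.finrank_le_finrank_of_injective hinj) ?_⟩
  rw [Module.finrank_pi]




/-- `Λ_m` is a spectrum of `μ_m`. -/
theorem example_finite_spectrum (a b : ℤ) (ha : 3 ≤ a) (hb : 3 ≤ b)
    (M : Matrix (Fin 2) (Fin 2) ℤ) (hMeq : M = !![0, 3 * b + 1; 3 * a, 0])
    (D : Finset (Fin 2 → ℤ)) (hD : D = {![0, 0], ![1, 0], ![2, 9]})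
    (C : Set (Fin 2 → ℝ))
    (hC : C = {![0, 0], ![1 / 3, 0], ![2 / 3, 0]})
    (m : ℕ) (hm : 1 ≤ m) (Λm : Set (Fin 2 → ℝ))
    (hΛm : Λm = {x | ∃ c : Fin m → (Fin 2 → ℝ), (∀ i, c i ∈ C) ∧
        x = ∑ i : Fin m, ((toR M)ᵀ ^ (i.val + 1)).mulVec (c i)}) :
    IsSpectrum (muN (toR M) D m) Λm := by
  classical
  set N : Matrix (Fin 2) (Fin 2) ℝ := toR M with hNdef
  -- digit set bookkeeping
  have hdg : dg 0 = ![0,0] ∧ dg 1 = ![1,0] ∧ dg 2 = ![2,9] := ⟨rfl, rfl, rfl⟩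
  have hDsum : ∀ f : (Fin 2 → ℤ) → Measure V, ∑ d ∈ D, f d = ∑ r : Fin 3, f (dg r) := by
    intro f
    rw [hD, Fin.sum_univ_three]
    have h0 : (![0,0] : Fin 2 → ℤ) ∉ ({![1,0], ![2,9]} : Finset (Fin 2 → ℤ)) := by decide
    have h1 : (![1,0] : Fin 2 → ℤ) ∉ ({![2,9]} : Finset (Fin 2 → ℤ)) := by decide
    rw [Finset.sum_insert h0, Finset.sum_insert h1, Finset.sum_singleton]
    rw [hdg.1, hdg.2.1, hdg.2.2, add_assoc]
  have hcard : (D.card : ℝ≥0∞) = 3 := by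
    rw [hD]
    have : ({![0, 0], ![1, 0], ![2, 9]} : Finset (Fin 2 → ℤ)).card = 3 := by decide
    rw [this]; norm_num
  have hatomic : muN N D m =
      ((3:ℝ≥0∞)⁻¹ ^ m) • ∑ ε : Fin m → Fin 3, Measure.dirac (Xat N m ε) :=
    muN_atomic N D hDsum hcard m
  set μ : Measure V := muN N D m with hμdef
  have hcne : ((3:ℝ≥0∞)⁻¹ ^ m) ≠ 0 :=
    pow_ne_zero _ (ENNReal.inv_ne_zero.mpr (by norm_num))
  haveI hprob : IsProbabilityMeasure μ := by
    constructor
    rw [hatomic, Measure.smul_apply, Measure.finset_sum_apply]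
    simp only [measure_univ, Finset.sum_const, Finset.card_univ, nsmul_eq_mul, mul_one,
      smul_eq_mul]
    rw [Fintype.card_fun]
    simp only [Fintype.card_fin, Nat.cast_pow, Nat.cast_ofNat]
    rw [← mul_pow, ENNReal.inv_mul_cancel (by norm_num) (by norm_num), one_pow]
  -- Λm as range of lamF
  have hcg3 : cg 0 = ![0,0] ∧ cg 1 = ![1/3,0] ∧ cg 2 = ![2/3,0] := ⟨rfl, rfl, rfl⟩
  have hcgC : ∀ r : Fin 3, cg r ∈ C := by
    intro r
    rw [hC]
    fin_cases r
    · exact Or.inl rfl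
    · exact Or.inr (Or.inl rfl)
    · exact Or.inr (Or.inr rfl)
  have hCrange : ∀ v ∈ C, ∃ r : Fin 3, v = cg r := by
    rw [hC]
    rintro v (rfl | rfl | rfl)
    exacts [⟨0, rfl⟩, ⟨1, rfl⟩, ⟨2, rfl⟩]
  have hΛ : Λm = Set.range (lamF N m) := by
    rw [hΛm]
    ext x
    constructor
    · rintro ⟨c, hcC, rfl⟩
      choose σ hσ using fun i => hCrange (c i) (hcC i)
      refine ⟨σ, ?_⟩
      unfold lamF
      exact (Finset.sum_congr rfl fun i _ => by rw [← hσ i]).symm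
    · rintro ⟨σ, rfl⟩
      exact ⟨fun i => cg (σ i), fun i => hcgC _, rfl⟩
  have hlaminj : Function.Injective (lamF N m) := by
    intro σ σ' hEq
    by_contra hne
    have h0 := key_sum ha hb hMeq m σ σ' hne
    have hz : ∀ ε : Fin m → Fin 3,
        dotR (lamF N m σ - lamF N m σ') (Xat N m ε) = 0 := by
      intro ε
      rw [hEq, sub_self]
      simp [dotR_two]
    rw [Finset.sum_congr rfl fun ε _ => by rw [hz ε, eexp_zero]] at h0
    simp only [Finset.sum_const, Finset.card_univ, nsmul_eq_mul, mul_one,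
      Fintype.card_fun, Fintype.card_fin] at h0
    norm_num at h0
  have eΛ : (Fin m → Fin 3) ≃ Λm :=
    (Equiv.ofInjective _ hlaminj).trans (Equiv.setCongr hΛ.symm)
  haveI : Fintype Λm := Fintype.ofEquiv _ eΛ
  haveI : Nonempty Λm := ⟨eΛ (fun _ => 0)⟩
  have hcardΛ : Fintype.card Λm = 3 ^ m := by
    rw [← Fintype.card_congr eΛ, Fintype.card_fun]
    simp
  -- membership / sigma choice
  have hsig : ∀ l : Λm, ∃ σ : Fin m → Fin 3, lamF N m σ = (l : V) := by
    intro l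
    have h2 : (l : V) ∈ Set.range (lamF N m) := by
      rw [← hΛ]; exact l.2
    exact h2.imp fun σ h => h
  choose sig hsigeq using hsig
  -- exponentials in L²
  have hcontdot : ∀ l : V, Continuous fun x : V => dotR l x := by
    intro l
    unfold dotR
    exact continuous_finset_sum _ fun i _ => continuous_const.mul (continuous_apply i)
  have hcont : ∀ l : V, Continuous (expFun l) := by
    intro l
    exact Complex.continuous_exp.comp
      (continuous_const.mul (Complex.continuous_ofReal.comp (hcontdot l)))
  have hmem : ∀ l : V, MemLp (expFun l) 2 μ := by
    intro l
    refine MemLp.of_bound (hcont l).aestronglyMeasurable 1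
      (Filter.Eventually.of_forall fun x => ?_)
    exact le_of_eq (norm_eexp (dotR l x))
  set v : Λm → Lp ℂ 2 μ := fun l => (hmem (l : V)).toLp (expFun (l : V)) with hv
  -- inner products
  have hinner : ∀ l l' : Λm,
      (inner ℂ (v l) (v l') : ℂ) = ∫ x, eexp (dotR ((l' : V) - (l : V)) x) ∂μ := by
    intro l l'
    rw [MeasureTheory.L2.inner_def]
    refine integral_congr_ae ?_
    filter_upwards [(hmem (l : V)).coeFn_toLp, (hmem (l' : V)).coeFn_toLp] with x h h'
    rw [h, h', RCLike.inner_apply]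
    show eexp (dotR (l' : V) x) * (starRingEnd ℂ) (eexp (dotR (l : V) x)) = _
    rw [mul_comm, conj_eexp, ← eexp_add]
    congr 1
    rw [dotR_sub_left]
    ring
  have hon : Orthonormal ℂ v := by
    rw [orthonormal_iff_ite]
    intro l l'
    rw [hinner l l']
    by_cases hll : l = l'
    · subst hll
      rw [if_pos rfl]
      have hz : ∀ x : V, eexp (dotR ((l : V) - (l : V)) x) = 1 := by
        intro x
        rw [sub_self]
        have : dotR 0 x = 0 := by simp [dotR_two]
        rw [this, eexp_zero]
      rw [integral_congr_ae (Filter.Eventually.of_forall hz)]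
      simp [measure_univ]
    · rw [if_neg hll]
      have hσne : sig l' ≠ sig l := by
        intro h
        apply hll
        apply Subtype.ext
        rw [← hsigeq l, ← hsigeq l', h]
      have hks := key_sum ha hb hMeq m (sig l') (sig l) hσne
      rw [← hsigeq l, ← hsigeq l']
      rw [hatomic]
      have hIA := integral_atomic ((3:ℝ≥0∞)⁻¹ ^ m) (Xat N m)
        (fun x => eexp (dotR (lamF N m (sig l') - lamF N m (sig l)) x))
        (continuous_eexp.comp (hcontdot _))
      rw [hIA, hNdef, hks, smul_zero]
  -- dimension count
  obtain ⟨hfd, hle⟩ := finrank_Lp_le μ (Xat N m) _ hatomic hcne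
  haveI := hfd
  have hli := hon.linearIndependent
  have hcard_le : Fintype.card Λm ≤ Module.finrank ℂ (Lp ℂ 2 μ) :=
    hli.fintype_card_le_finrank
  have hfr : Fintype.card Λm = Module.finrank ℂ (Lp ℂ 2 μ) := by
    refine le_antisymm hcard_le (le_trans hle ?_)
    rw [hcardΛ, Fintype.card_fun]
    simp
  let bb := basisOfLinearIndependentOfCardEqFinrank hli hfr
  have hspan : ⊤ ≤ (Submodule.span ℂ (Set.range v)).topologicalClosure := by
    have h1 : Submodule.span ℂ (Set.range v) = ⊤ := by
      rw [← coe_basisOfLinearIndependentOfCardEqFinrank hli hfr]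
      exact bb.span_eq
    rw [← h1]
    exact Submodule.le_topologicalClosure _
  refine ⟨HilbertBasis.mk hon hspan, fun l => ?_⟩
  rw [HilbertBasis.coe_mk]
  exact (hmem (l : V)).coeFn_toLp

end SA
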